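/- For any pushdown automaton, the language it accepts can be expressed as h(R ∩ D_k) for some regular language R, Dyck language D_k, and free-monoid homomorphism h (Chomsky–Schützenberger theorem); hence any device that accepts all regular languages, all Dyck languages, is closed under intersection of a regular language with a Dyck language, and under homomorphic image, accepts all context-free languages. -/

import Mathlib

/-- The `k`-symbol Dyck language `D_k` over the alphabet `Fin k × Bool` (`(i, true)` = `aᵢ`,
`(i, false)` = `bᵢ`). -/
inductive DyckK (k : ℕ) : List (Fin k × Bool) → Prop
  | nil : DyckK k []
  | wrap (i : Fin k) {x : List (Fin k × Bool)} :
      DyckK k x → DyckK k ((i, true) :: x ++ [(i, false)])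
  | append {x y : List (Fin k × Bool)} : DyckK k x → DyckK k y → DyckK k (x ++ y)

namespace CS

open List ContextFreeGrammar ContextFreeRule

theorem dyck_decomp {k : ℕ} {w : List (Fin k × Bool)} (hw : DyckK k w) :
    w = [] ∨ ∃ a x y, DyckK k x ∧ DyckK k y ∧ w = (a, true) :: (x ++ (a, false) :: y) := by
  induction hw with
  | nil => exact Or.inl rfl
  | wrap i hx _ => exact Or.inr ⟨i, _, [], hx, DyckK.nil, by simp⟩
  | append hx hy ihx ihy =>
    rcases ihx with rfl | ⟨a, x', y', hx', hy', rfl⟩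
    · simpa using ihy
    · exact Or.inr ⟨a, x', y' ++ _, hx', hy'.append hy, by simp⟩

theorem dyck_head_open {k : ℕ} {w : List (Fin k × Bool)} (h : DyckK k w) (hw : w ≠ []) :
    ∃ a, w.head? = some (a, true) := by
  rcases dyck_decomp h with rfl | ⟨a, x, y, _, _, rfl⟩
  · exact absurd rfl hw
  · exact ⟨a, rfl⟩

variable {T : Type}

/-- Derivations with a bounded number of steps. -/
inductive DerN (g : ContextFreeGrammar.{0} T) :
    ℕ → List (Symbol T g.NT) → List (Symbol T g.NT) → Prop
  | refl (n u) : DerN g n u u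
  | head {n u v w} : g.Produces u v → DerN g n v w → DerN g (n + 1) u w

variable {g : ContextFreeGrammar.{0} T}

theorem DerN.succ {n u v} (h : DerN g n u v) : DerN g (n + 1) u v := by
  induction h with
  | refl => exact .refl ..
  | head h _ ih => exact .head h ih

theorem DerN.mono {n m u v} (h : DerN g n u v) (hnm : n ≤ m) : DerN g m u v := by
  induction hnm with
  | refl => exact h
  | step _ ih => exact ih.succ

theorem DerN.tail {n u v w} (h : DerN g n u v) (hs : g.Produces v w) : DerN g (n + 1) u w := by
  induction h with
  | refl => exact .head hs (.refl ..)
  | head h1 _ ih => exact .head h1 (ih hs)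

theorem derN_of_derives {u v} (h : g.Derives u v) : ∃ n, DerN g n u v := by
  induction h with
  | refl => exact ⟨0, .refl ..⟩
  | tail _ hstep ih => obtain ⟨n, hn⟩ := ih; exact ⟨n + 1, hn.tail hstep⟩

theorem DerN.derives {n u v} (h : DerN g n u v) : g.Derives u v := by
  induction h with
  | refl => rfl
  | head h1 _ ih => exact h1.trans_derives ih

theorem produces_map_terminal_false {t : List T} {v} :
    ¬ g.Produces (List.map Symbol.terminal t) v := by
  rintro ⟨r, -, hr⟩
  obtain ⟨p, q, hu, -⟩ := hr.exists_parts
  have : Symbol.nonterminal r.input ∈ List.map (Symbol.terminal (N := g.NT)) t := by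
    rw [hu]; simp
  simp only [List.mem_map] at this
  obtain ⟨a, -, h⟩ := this
  cases h

theorem DerN.terminal_rigid {n} {t : List T} {v}
    (h : DerN g n (List.map Symbol.terminal t) v) : v = List.map Symbol.terminal t := by
  cases h with
  | refl => rfl
  | head h1 _ => exact absurd h1 produces_map_terminal_false

theorem DerN.append_split :
    ∀ {n s x}, DerN g n s x → ∀ u v, s = u ++ v →
      ∃ x₁ x₂, x = x₁ ++ x₂ ∧ DerN g n u x₁ ∧ DerN g n v x₂ := by
  intro n s x h
  induction h with
  | refl n s => rintro u v rfl; exact ⟨u, v, rfl, .refl .., .refl ..⟩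
  | @head n u' v' w hp ht ih =>
    rintro u v rfl
    obtain ⟨r, hr, hrw⟩ := hp
    obtain ⟨p, q, hpq, rfl⟩ := hrw.exists_parts
    rw [List.append_assoc] at hpq
    rcases List.append_eq_append_iff.mp hpq with ⟨a', rfl, ha2⟩ | ⟨c', rfl, hc2⟩
    · -- p = u ++ a' : the nonterminal is inside v
      obtain ⟨x₁, x₂, rfl, h1, h2⟩ := ih u (a' ++ r.output ++ q) (by simp)
      refine ⟨x₁, x₂, rfl, h1.succ, .head ⟨r, hr, ?_⟩ h2⟩
      have := rewrites_of_exists_parts r a' q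
      rw [List.append_assoc] at this
      rwa [← ha2] at this
    · -- u = p ++ c' with [nt] ++ q = c' ++ v
      cases c' with
      | nil =>
        simp only [List.nil_append] at hc2
        subst hc2
        obtain ⟨x₁, x₂, rfl, h1, h2⟩ := ih (p ++ []) (r.output ++ q) (by simp)
        refine ⟨x₁, x₂, rfl, h1.succ, .head ⟨r, hr, ?_⟩ h2⟩
        simpa using rewrites_of_exists_parts r [] q
      | cons b c'' =>
        simp only [List.singleton_append, List.cons.injEq] at hc2
        obtain ⟨rfl, rfl⟩ := hc2
        obtain ⟨x₁, x₂, rfl, h1, h2⟩ := ih (p ++ r.output ++ c'') v (by simp)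
        refine ⟨x₁, x₂, rfl, .head ⟨r, hr, ?_⟩ h1, h2.succ⟩
        simpa using rewrites_of_exists_parts r p c''

theorem DerN.nt_head {n} {A : g.NT} {w : List T}
    (h : DerN g n [Symbol.nonterminal A] (List.map Symbol.terminal w)) :
    ∃ m < n, ∃ r ∈ g.rules, r.input = A ∧ DerN g m r.output (List.map Symbol.terminal w) := by
  generalize htw : List.map (Symbol.terminal (N := g.NT)) w = tw at h
  cases h with
  | refl =>
    exfalso
    cases w with
    | nil => simp at htw
    | cons a t =>
      rw [List.map_cons] at htw
      exact nomatch (List.cons.inj htw).1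
  | @head _ _ v _ hp ht =>
    obtain ⟨r, hr, hrw⟩ := hp
    obtain ⟨p, q, hpq, rfl⟩ := hrw.exists_parts
    have hp0 : p = [] ∧ Symbol.nonterminal (T := T) A = Symbol.nonterminal r.input ∧ q = [] := by
      cases p with
      | nil =>
        simp only [List.nil_append, List.singleton_append, List.cons.injEq] at hpq
        exact ⟨rfl, hpq.1, hpq.2.symm⟩
      | cons b p' =>
        exfalso
        have := congrArg List.length hpq
        simp at this
    obtain ⟨rfl, hA, rfl⟩ := hp0
    exact ⟨_, Nat.lt_succ_self _, r, hr, (Symbol.nonterminal.inj hA).symm, by simpa using ht⟩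

end CS

section PartB
noncomputable section
namespace CS

open List ContextFreeGrammar ContextFreeRule

variable {T : Type} (g : ContextFreeGrammar.{0} T)

def rl : List (ContextFreeRule T g.NT) := g.rules.toList

/-- number of rules -/
def nn : ℕ := (rl g).length

/-- max output length -/
def MM : ℕ := ((rl g).map (fun r => r.output.length)).foldr max 0

def kk : ℕ := nn g * (MM g + 1)

def out (j : Fin (nn g)) : List (Symbol T g.NT) := ((rl g).get j).output

def inp (j : Fin (nn g)) : g.NT := ((rl g).get j).input

def mj (j : Fin (nn g)) : ℕ := (out g j).length

lemma le_foldr_max {l : List ℕ} {a : ℕ} (h : a ∈ l) : a ≤ l.foldr max 0 := by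
  induction l with
  | nil => simp at h
  | cons b l ih =>
    rcases List.mem_cons.mp h with rfl | h
    · exact le_max_left _ _
    · exact le_trans (ih h) (le_max_right _ _)

lemma mj_le_MM (j : Fin (nn g)) : mj g j ≤ MM g :=
  le_foldr_max (List.mem_map.mpr ⟨(rl g).get j, List.get_mem _ _, rfl⟩)

lemma get_mem_rules (j : Fin (nn g)) : (rl g).get j ∈ g.rules :=
  Finset.mem_toList.mp (List.get_mem _ _)

def enc (j : Fin (nn g)) (i : ℕ) : Fin (kk g) :=
  finProdFinEquiv (j, ⟨min i (MM g), Nat.lt_succ_of_le (min_le_right _ _)⟩)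

lemma symm_enc {j : Fin (nn g)} {i : ℕ} (hi : i ≤ MM g) :
    finProdFinEquiv.symm (enc g j i) = (j, ⟨i, Nat.lt_succ_of_le hi⟩) := by
  rw [enc, Equiv.symm_apply_apply]
  simp [min_eq_left hi]

lemma enc_inj {j j' : Fin (nn g)} {i i' : ℕ} (hi : i ≤ MM g) (hi' : i' ≤ MM g)
    (h : enc g j i = enc g j' i') : j = j' ∧ i = i' := by
  have h2 := congrArg finProdFinEquiv.symm h
  rw [symm_enc g hi, symm_enc g hi'] at h2
  obtain ⟨h3, h4⟩ := Prod.mk.inj h2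
  exact ⟨h3, congrArg Fin.val h4⟩

lemma enc_inj' {j j' : Fin (nn g)} {i i' : ℕ} (hi : i < mj g j) (hi' : i' < mj g j')
    (h : enc g j i = enc g j' i') : j = j' ∧ i = i' :=
  enc_inj g (le_trans (Nat.le_of_lt hi) (mj_le_MM g j))
    (le_trans (Nat.le_of_lt hi') (mj_le_MM g j')) h

/-- opening bracket -/
def Op (j : Fin (nn g)) (i : ℕ) : Fin (kk g) × Bool := (enc g j i, true)

/-- closing bracket -/
def Cl (j : Fin (nn g)) (i : ℕ) : Fin (kk g) × Bool := (enc g j i, false)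

/-- the letter-image map of the homomorphism -/
def ff : Fin (kk g) × Bool → List T := fun x =>
  if x.2 then
    match (out g (finProdFinEquiv.symm x.1).1)[((finProdFinEquiv.symm x.1).2 : Fin (MM g + 1)).val]? with
    | some (Symbol.terminal a) => [a]
    | _ => []
  else []

lemma ff_Cl (j : Fin (nn g)) (i : ℕ) : ff g (Cl g j i) = [] := rfl

lemma ff_Op_terminal {j : Fin (nn g)} {i : ℕ} {a : T} (hi : i ≤ MM g)
    (h : (out g j)[i]? = some (Symbol.terminal a)) : ff g (Op g j i) = [a] := by
  rw [ff]
  simp only [Op, if_true, symm_enc g hi]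
  rw [h]

lemma ff_Op_nonterminal {j : Fin (nn g)} {i : ℕ} {B : g.NT} (hi : i ≤ MM g)
    (h : (out g j)[i]? = some (Symbol.nonterminal B)) : ff g (Op g j i) = [] := by
  rw [ff]
  simp only [Op, if_true, symm_enc g hi]
  rw [h]

/-- a position can host an "empty" subtree -/
def okLeaf (j : Fin (nn g)) (i : ℕ) : Prop :=
  (∃ a, (out g j)[i]? = some (Symbol.terminal a)) ∨
  (∃ r ∈ g.rules, (out g j)[i]? = some (Symbol.nonterminal r.input) ∧ r.output = [])

/-- allowed adjacent pairs -/
def P : (Fin (kk g) × Bool) → (Fin (kk g) × Bool) → Prop := fun x y =>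
  (∃ j i, i < mj g j ∧ x = Op g j i ∧ y = Cl g j i ∧ okLeaf g j i) ∨
  (∃ j i j', i < mj g j ∧ 0 < mj g j' ∧ x = Op g j i ∧ y = Op g j' 0 ∧
      (out g j)[i]? = some (Symbol.nonterminal (inp g j'))) ∨
  (∃ j i, i + 1 < mj g j ∧ x = Cl g j i ∧ y = Op g j (i + 1)) ∨
  (∃ j i j', i < mj g j ∧ 0 < mj g j' ∧ x = Cl g j' (mj g j' - 1) ∧ y = Cl g j i ∧
      (out g j)[i]? = some (Symbol.nonterminal (inp g j')))

/-- valid letters -/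
def Vl (x : Fin (kk g) × Bool) : Prop := ∃ j i, i < mj g j ∧ x.1 = enc g j i

def good0 (x : Fin (kk g) × Bool) : Prop :=
  ∃ j, 0 < mj g j ∧ inp g j = g.initial ∧ x = Op g j 0

def goodE (x : Fin (kk g) × Bool) : Prop :=
  ∃ j, 0 < mj g j ∧ inp g j = g.initial ∧ x = Cl g j (mj g j - 1)

open Classical in
/-- the DFA recognizing the regular language R -/
noncomputable def dfaR : DFA (Fin (kk g) × Bool) (Option (Option (Fin (kk g) × Bool))) where
  step := fun s x => match s with
    | none => none
    | some none => if good0 g x ∧ Vl g x then some (some x) else none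
    | some (some b) => if P g b x ∧ Vl g x then some (some x) else none
  start := some none
  accept := {s | (s = some none ∧ [] ∈ g.language) ∨ ∃ x, s = some (some x) ∧ goodE g x}

end CS
end
end PartB

section PartC
namespace CS

open List ContextFreeGrammar ContextFreeRule

variable {T : Type} (g : ContextFreeGrammar.{0} T)

open Classical in
lemma dfaR_eval (w : List (Fin (kk g) × Bool)) :
    (dfaR g).evalFrom (some none) w =
      if hw : w = [] then some none
      else if List.Chain' (P g) w ∧ (∀ x ∈ w, Vl g x) ∧ good0 g (w.head hw)
        then some (some (w.getLast hw)) else none := by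
  induction w using List.reverseRecOn with
  | nil => simp [DFA.evalFrom]
  | append_singleton l a ih =>
    rw [DFA.evalFrom_append_singleton, ih]
    rcases eq_or_ne l [] with rfl | hl
    · simp only [List.nil_append, dite_true, reduceDIte]
      show (if good0 g a ∧ Vl g a then some (some a) else none) = _
      rw [dif_neg (by simp)]
      by_cases h : good0 g a ∧ Vl g a
      · rw [if_pos h, if_pos (by simpa [List.Chain'] using ⟨h.2, h.1⟩)]
        simp
      · rw [if_neg h, if_neg (by
          rintro ⟨-, h2, h3⟩
          exact h ⟨h3, h2 a (by simp)⟩)]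
    · rw [dif_neg hl, dif_neg (by simp)]
      have hhead : (l ++ [a]).head (by simp) = l.head hl := by
        rw [List.head_append]
        simp [hl]
      have hlast : (l ++ [a]).getLast (by simp) = a := by
        rw [List.getLast_append]
        simp
      have hchain : List.Chain' (P g) (l ++ [a]) ↔
          List.Chain' (P g) l ∧ P g (l.getLast hl) a := by
        rw [List.Chain', List.isChain_append]
        simp [List.Chain', List.getLast?_eq_getLast hl]
      have hV : (∀ x ∈ l ++ [a], Vl g x) ↔ (∀ x ∈ l, Vl g x) ∧ Vl g a := by
        constructor
        · exact fun h => ⟨fun x hx => h x (by simp [hx]), h a (by simp)⟩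
        · rintro ⟨h1, h2⟩ x hx
          rcases List.mem_append.mp hx with hx | hx
          · exact h1 x hx
          · simp at hx; subst hx; exact h2
      by_cases hcond : List.Chain' (P g) l ∧ (∀ x ∈ l, Vl g x) ∧ good0 g (l.head hl)
      · rw [if_pos hcond]
        show (if P g (l.getLast hl) a ∧ Vl g a then some (some a) else none) = _
        by_cases h2 : P g (l.getLast hl) a ∧ Vl g a
        · rw [if_pos h2, if_pos (by
            rw [hchain, hV, hhead]
            exact ⟨⟨hcond.1, h2.1⟩, ⟨hcond.2.1, h2.2⟩, hcond.2.2⟩), hlast]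
        · rw [if_neg h2, if_neg (by
            rw [hchain, hV, hhead]
            rintro ⟨⟨_, hpa⟩, ⟨_, hva⟩, _⟩
            exact h2 ⟨hpa, hva⟩)]
      · rw [if_neg hcond]
        show none = _
        rw [if_neg (by
          rw [hchain, hV, hhead]
          rintro ⟨hc, hv, hg⟩
          exact hcond ⟨hc.1, hv.1, hg⟩)]

/-- the regular language R -/
def RL : Language (Fin (kk g) × Bool) := (dfaR g).accepts

lemma RL_regular : (RL g).IsRegular := ⟨_, inferInstance, dfaR g, rfl⟩

lemma mem_RL {w : List (Fin (kk g) × Bool)} :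
    w ∈ RL g ↔ ((w = [] ∧ [] ∈ g.language) ∨
      ∃ hw : w ≠ [], List.Chain' (P g) w ∧ (∀ x ∈ w, Vl g x) ∧ good0 g (w.head hw) ∧
        goodE g (w.getLast hw)) := by
  have h0 : w ∈ RL g ↔ (dfaR g).evalFrom (some none) w ∈ (dfaR g).accept := Iff.rfl
  rw [h0, dfaR_eval]
  rcases eq_or_ne w [] with rfl | hw
  · rw [dif_pos rfl]
    show (some none = some none ∧ _) ∨ (∃ x, some none = some (some x) ∧ _) ↔ _
    simp
  · rw [dif_neg hw]
    split_ifs with hcond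
    · show (some (some (w.getLast hw)) = some none ∧ _) ∨
        (∃ x, some (some (w.getLast hw)) = some (some x) ∧ goodE g x) ↔ _
      constructor
      · rintro (⟨h, -⟩ | ⟨x, hx, hgx⟩)
        · exact absurd h (by simp)
        · exact Or.inr ⟨hw, hcond.1, hcond.2.1, hcond.2.2,
            by rwa [Option.some.inj (Option.some.inj hx)]⟩
      · rintro (⟨rfl, -⟩ | ⟨hw2, -, -, -, hE⟩)
        · exact absurd rfl hw
        · exact Or.inr ⟨_, rfl, hE⟩
    · show (none = some none ∧ _) ∨ (∃ x, none = some (some x) ∧ _) ↔ _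
      constructor
      · rintro (⟨h, -⟩ | ⟨x, h, -⟩) <;> cases h
      · rintro (⟨rfl, -⟩ | ⟨hw2, h1, h2, h3, -⟩)
        · exact absurd rfl hw
        · exact absurd ⟨h1, h2, h3⟩ hcond


end CS
end PartC

section PartD
namespace CS

open List ContextFreeGrammar ContextFreeRule

variable {T : Type} (g : ContextFreeGrammar.{0} T)

lemma letter_inj {j j' : Fin (nn g)} {i i' : ℕ} {b b' : Bool} (hi : i < mj g j)
    (hi' : i' < mj g j')
    (h : ((enc g j i, b) : Fin (kk g) × Bool) = (enc g j' i', b')) : j = j' ∧ i = i' ∧ b = b' := by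
  obtain ⟨h1, h2⟩ := Prod.mk.inj h
  obtain ⟨h3, h4⟩ := enc_inj' g hi hi' h1
  exact ⟨h3, h4, h2⟩

lemma P_op_op {j j₁ : Fin (nn g)} {i i₁ : ℕ} (hi : i < mj g j) (hi₁ : i₁ < mj g j₁)
    (h : P g (Op g j i) (Op g j₁ i₁)) :
    i₁ = 0 ∧ (out g j)[i]? = some (Symbol.nonterminal (inp g j₁)) := by
  rcases h with ⟨j₀, i₀, h0, hx, hy, hok⟩ | ⟨j₀, i₀, j', h0, h0', hx, hy, hs⟩ |
    ⟨j₀, i₀, h0, hx, hy⟩ | ⟨j₀, i₀, j', h0, h0', hx, hy, hs⟩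
  · exact absurd (letter_inj g hi₁ h0 hy).2.2 (by simp)
  · obtain ⟨rfl, rfl, -⟩ := letter_inj g hi h0 hx
    obtain ⟨rfl, rfl, -⟩ := letter_inj g hi₁ h0' hy
    exact ⟨rfl, hs⟩
  · exact absurd (letter_inj g hi (show i₀ < mj g j₀ by omega) hx).2.2 (by simp)
  · exact absurd (letter_inj g hi (Nat.sub_lt h0' (by omega)) hx).2.2 (by simp)

lemma P_op_cl {j j₁ : Fin (nn g)} {i i₁ : ℕ} (hi : i < mj g j) (hi₁ : i₁ < mj g j₁)
    (h : P g (Op g j i) (Cl g j₁ i₁)) : j₁ = j ∧ i₁ = i ∧ okLeaf g j i := by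
  rcases h with ⟨j₀, i₀, h0, hx, hy, hok⟩ | ⟨j₀, i₀, j', h0, h0', hx, hy, hs⟩ |
    ⟨j₀, i₀, h0, hx, hy⟩ | ⟨j₀, i₀, j', h0, h0', hx, hy, hs⟩
  · obtain ⟨rfl, rfl, -⟩ := letter_inj g hi h0 hx
    obtain ⟨h5, h6, -⟩ := letter_inj g hi₁ h0 hy
    exact ⟨h5, h6, hok⟩
  · exact absurd (letter_inj g hi₁ h0' hy).2.2 (by simp)
  · exact absurd (letter_inj g hi (show i₀ < mj g j₀ by omega) hx).2.2 (by simp)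
  · exact absurd (letter_inj g hi (Nat.sub_lt h0' (by omega)) hx).2.2 (by simp)

lemma P_cl_op {j j₁ : Fin (nn g)} {i i₁ : ℕ} (hi : i < mj g j) (hi₁ : i₁ < mj g j₁)
    (h : P g (Cl g j i) (Op g j₁ i₁)) : j₁ = j ∧ i₁ = i + 1 ∧ i + 1 < mj g j := by
  rcases h with ⟨j₀, i₀, h0, hx, hy, hok⟩ | ⟨j₀, i₀, j', h0, h0', hx, hy, hs⟩ |
    ⟨j₀, i₀, h0, hx, hy⟩ | ⟨j₀, i₀, j', h0, h0', hx, hy, hs⟩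
  · exact absurd (letter_inj g hi h0 hx).2.2 (by simp)
  · exact absurd (letter_inj g hi (show i₀ < mj g j₀ by omega) hx).2.2 (by simp)
  · obtain ⟨rfl, rfl, -⟩ := letter_inj g hi (show i₀ < mj g j₀ by omega) hx
    obtain ⟨h5, h6, -⟩ := letter_inj g hi₁ h0 hy
    exact ⟨h5, h6, h0⟩
  · exact absurd (letter_inj g hi₁ h0 hy).2.2 (by simp)

lemma P_cl_cl {j j₁ : Fin (nn g)} {i i₁ : ℕ} (hi : i < mj g j) (hi₁ : i₁ < mj g j₁)
    (h : P g (Cl g j i) (Cl g j₁ i₁)) :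
    i = mj g j - 1 ∧ (out g j₁)[i₁]? = some (Symbol.nonterminal (inp g j)) := by
  rcases h with ⟨j₀, i₀, h0, hx, hy, hok⟩ | ⟨j₀, i₀, j', h0, h0', hx, hy, hs⟩ |
    ⟨j₀, i₀, h0, hx, hy⟩ | ⟨j₀, i₀, j', h0, h0', hx, hy, hs⟩
  · exact absurd (letter_inj g hi h0 hx).2.2 (by simp)
  · exact absurd (letter_inj g hi h0 hx).2.2 (by simp)
  · exact absurd (letter_inj g hi₁ (show i₀ + 1 < mj g j₀ from h0) hy).2.2 (by simp)
  · obtain ⟨rfl, rfl, -⟩ := letter_inj g hi (Nat.sub_lt h0' (by omega)) hx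
    obtain ⟨rfl, rfl, -⟩ := letter_inj g hi₁ h0 hy
    exact ⟨rfl, hs⟩

end CS
end PartD

section PartE
namespace CS

open List ContextFreeGrammar ContextFreeRule

variable {T : Type} (g : ContextFreeGrammar.{0} T)

lemma decode : ∀ (N : ℕ) (w : List (Fin (kk g) × Bool)), w.length ≤ N → DyckK (kk g) w →
    List.Chain' (P g) w → (∀ z ∈ w, Vl g z) →
    ∀ j i, i < mj g j → w.head? = some (Op g j i) →
    ∃ i', i ≤ i' ∧ i' < mj g j ∧ w.getLast? = some (Cl g j i') ∧
      g.Derives (((out g j).take (i' + 1)).drop i)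
        ((w.flatMap (ff g)).map Symbol.terminal) := by
  intro N
  induction N with
  | zero =>
    intro w hlen hd hch hv j i hi hhead
    rw [List.length_eq_zero_iff.mp (Nat.le_zero.mp hlen)] at hhead
    simp at hhead
  | succ N ih =>
    intro w hlen hd hch hv j i hi hhead
    rcases dyck_decomp hd with rfl | ⟨a, x, y, hdx, hdy, rfl⟩
    · simp at hhead
    · have ha : a = enc g j i := by
        have := Option.some.inj hhead
        exact congrArg Prod.fst this
      subst ha
      -- now w = Op g j i :: (x ++ Cl g j i :: y)  (definitionally)
      rw [show ((enc g j i, true) : Fin (kk g) × Bool) = Op g j i from rfl,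
        show ((enc g j i, false) : Fin (kk g) × Bool) = Cl g j i from rfl] at *
      rw [List.Chain', List.isChain_cons] at hch
      obtain ⟨hpair0, hch'⟩ := hch
      rw [show (Cl g j i :: y) = [Cl g j i] ++ y by simp] at hch'
      rw [← List.append_assoc] at hch'
      rw [List.isChain_append] at hch'
      obtain ⟨hchxc, hchy, hjy⟩ := hch'
      rw [List.isChain_append] at hchxc
      obtain ⟨hchx, -, hjxc⟩ := hchxc
      have hlenx : x.length ≤ N := by
        have := hlen
        simp only [List.length_cons, List.length_append] at this
        omega
      have hleny : y.length ≤ N := by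
        have := hlen
        simp only [List.length_cons, List.length_append] at this
        omega
      have hvx : ∀ z ∈ x, Vl g z := fun z hz => hv z (by simp [hz])
      have hvy : ∀ z ∈ y, Vl g z := fun z hz => hv z (by simp [hz])
      -- Step 1: derive D1 for the first block
      have D1 : g.Derives [(out g j)[i]'hi]
          ((ff g (Op g j i) ++ x.flatMap (ff g)).map Symbol.terminal) := by
        rcases eq_or_ne x [] with rfl | hx
        · -- empty block: leaf
          have hP0 : P g (Op g j i) (Cl g j i) := by
            apply hpair0
            simp
          obtain ⟨-, -, hok⟩ := P_op_cl g hi hi hP0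
          rcases hok with ⟨t, hterm⟩ | ⟨r, hr, hterm, hout⟩
          · obtain ⟨h1, h2⟩ := List.getElem?_eq_some_iff.mp hterm
            rw [show (out g j)[i]'hi = _ from h2, ff_Op_terminal g (le_trans (Nat.le_of_lt hi) (mj_le_MM g j)) hterm]
            simpa using Derives.refl ([Symbol.terminal t] : List (Symbol T g.NT))
          · obtain ⟨h1, h2⟩ := List.getElem?_eq_some_iff.mp hterm
            rw [show (out g j)[i]'hi = _ from h2, ff_Op_nonterminal g (le_trans (Nat.le_of_lt hi) (mj_le_MM g j)) hterm]
            simp only [List.flatMap_nil, List.append_nil, List.map_nil]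
            refine Produces.single ⟨r, hr, ?_⟩
            have := ContextFreeRule.Rewrites.input_output (r := r)
            rwa [hout] at this
        · -- nonempty block: a full subtree
          obtain ⟨a', hha'⟩ := dyck_head_open hdx hx
          obtain ⟨j₁, i₁, hi₁, henc⟩ := hv (a', true)
            (by
              apply List.mem_cons_of_mem
              exact List.mem_append_left _ (List.mem_of_mem_head? (by rw [hha']; rfl)))
          have ha' : a' = enc g j₁ i₁ := henc
          subst ha'
          have hh2 : x.head? = some (Op g j₁ i₁) := hha'
          have hP0 : P g (Op g j i) (Op g j₁ i₁) := by
            apply hpair0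
            rw [List.head?_append, hh2]
            rfl
          obtain ⟨hi₁0, hsym⟩ := P_op_op g hi hi₁ hP0
          subst hi₁0
          obtain ⟨i₂, -, hi₂, hlastx, hDx⟩ := ih x hlenx hdx hchx hvx j₁ 0 hi₁ hh2
          -- junction pair forces i₂ = mj g j₁ - 1
          have hPj : P g (Cl g j₁ i₂) (Cl g j i) := by
            apply hjxc (Cl g j₁ i₂) (by rw [hlastx]; rfl)
            rfl
          obtain ⟨hi₂e, -⟩ := P_cl_cl g hi₂ hi hPj
          rw [hi₂e] at hDx
          rw [show mj g j₁ - 1 + 1 = mj g j₁ by omega] at hDx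
          rw [show (mj g j₁) = (out g j₁).length from rfl, List.take_length, List.drop_zero] at hDx
          obtain ⟨h1, h2⟩ := List.getElem?_eq_some_iff.mp hsym
          rw [show (out g j)[i]'hi = _ from h2, ff_Op_nonterminal g (le_trans (Nat.le_of_lt hi) (mj_le_MM g j)) hsym]
          simp only [List.nil_append]
          refine Produces.trans_derives ⟨(rl g).get j₁, get_mem_rules g j₁, ?_⟩ hDx
          exact ContextFreeRule.Rewrites.input_output
      -- Step 2: process the rest
      rcases eq_or_ne y [] with rfl | hy
      · refine ⟨i, le_refl i, hi, ?_, ?_⟩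
        · rw [show Op g j i :: (x ++ Cl g j i :: ([] : List (Fin (kk g) × Bool)))
            = (Op g j i :: x) ++ [Cl g j i] by simp]
          exact List.getLast?_concat
        · have hsplit : ((out g j).take (i + 1)).drop i = [(out g j)[i]'hi] := by
            rw [List.drop_eq_getElem_cons (by
              rw [List.length_take]
              have hlen2 : (out g j).length = mj g j := rfl
              omega)]
            rw [List.drop_take]
            simp [List.getElem_take]
            rfl
          rw [hsplit]
          have hbind : (Op g j i :: (x ++ Cl g j i :: ([] : List (Fin (kk g) × Bool)))).flatMap (ff g)
              = ff g (Op g j i) ++ x.flatMap (ff g) := by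
            simp [List.flatMap_cons, List.flatMap_append, ff_Cl]
          rw [hbind]
          exact D1
      · obtain ⟨b, hhb⟩ := dyck_head_open hdy hy
        obtain ⟨j₃, i₃, hi₃, hencb⟩ := hv (b, true)
          (by
            apply List.mem_cons_of_mem
            apply List.mem_append_right
            exact List.mem_cons_of_mem _ (List.mem_of_mem_head? (by rw [hhb]; rfl)))
        have hb : b = enc g j₃ i₃ := hencb
        subst hb
        have hh3 : y.head? = some (Op g j₃ i₃) := hhb
        have hP1 : P g (Cl g j i) (Op g j₃ i₃) := by
          apply hjy (Cl g j i) (by rw [List.getLast?_concat]; rfl)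
          rw [hh3]
          rfl
        obtain ⟨h5, h6, hi1m⟩ := P_cl_op g hi hi₃ hP1
        have h5' : j = j₃ := h5.symm
        subst h5'
        subst h6
        obtain ⟨i₂, hle2, hi₂, hlasty, hDy⟩ := ih y hleny hdy hchy hvy j (i + 1) hi1m hh3
        refine ⟨i₂, by omega, hi₂, ?_, ?_⟩
        · rw [show Op g j i :: (x ++ Cl g j i :: y) = (Op g j i :: (x ++ [Cl g j i])) ++ y by simp]
          rw [List.getLast?_append, hlasty]
          rfl
        · have hsplit : ((out g j).take (i₂ + 1)).drop i
              = (out g j)[i]'hi :: ((out g j).take (i₂ + 1)).drop (i + 1) := by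
            rw [List.drop_eq_getElem_cons (by
              rw [List.length_take]
              have hlen2 : (out g j).length = mj g j := rfl
              omega)]
            rw [List.getElem_take]
            rfl
          rw [hsplit]
          have hbind : ((Op g j i :: (x ++ Cl g j i :: y)).flatMap (ff g)).map
                (Symbol.terminal (N := g.NT))
              = ((ff g (Op g j i) ++ x.flatMap (ff g)).map Symbol.terminal)
                ++ ((y.flatMap (ff g)).map Symbol.terminal) := by
            simp [List.flatMap_cons, List.flatMap_append, ff_Cl]
          rw [hbind]
          have step1 := D1.append_right (((out g j).take (i₂ + 1)).drop (i + 1))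
          have step2 := hDy.append_left ((ff g (Op g j i) ++ x.flatMap (ff g)).map Symbol.terminal)
          exact Derives.trans (by simpa using step1) step2
  
end CS
end PartE

section PartF
namespace CS

open List ContextFreeGrammar ContextFreeRule

variable {T : Type} (g : ContextFreeGrammar.{0} T)

def StC (N : ℕ) : Prop := ∀ (A : g.NT) (w : List T),
  DerN g N [Symbol.nonterminal A] (w.map Symbol.terminal) →
  ∃ v, DyckK (kk g) v ∧ List.Chain' (P g) v ∧ (∀ z ∈ v, Vl g z) ∧ v.flatMap (ff g) = w ∧
    ((v = [] ∧ ∃ r ∈ g.rules, r.input = A ∧ r.output = []) ∨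
     (∃ j, inp g j = A ∧ 0 < mj g j ∧ v.head? = some (Op g j 0) ∧
        v.getLast? = some (Cl g j (mj g j - 1))))

def StS (N : ℕ) : Prop := ∀ (j : Fin (nn g)) (i : ℕ) (w : List T), i ≤ mj g j →
  DerN g N ((out g j).drop i) (w.map Symbol.terminal) →
  ∃ v, DyckK (kk g) v ∧ List.Chain' (P g) v ∧ (∀ z ∈ v, Vl g z) ∧ v.flatMap (ff g) = w ∧
    ((i = mj g j ∧ v = [] ∧ w = []) ∨
     (i < mj g j ∧ v.head? = some (Op g j i) ∧ v.getLast? = some (Cl g j (mj g j - 1))))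

theorem encode_main : ∀ N : ℕ, StC g N ∧ StS g N := by
  intro N
  induction N using Nat.strong_induction_on with
  | _ N ih =>
    have hC : StC g N := by
      intro A w hD
      obtain ⟨n', hn', r, hr, hrA, hD'⟩ := hD.nt_head
      obtain ⟨j, hj0⟩ := List.mem_iff_get.mp (Finset.mem_toList.mpr hr)
      have hj : (rl g).get j = r := hj0
      have hD'' : DerN g n' ((out g j).drop 0) (w.map Symbol.terminal) := by
        rw [List.drop_zero]; show DerN g n' ((rl g).get j).output _; rw [hj]; exact hD'
      obtain ⟨v, hdv, hcv, hvv, hbv, hcase⟩ := (ih n' hn').2 j 0 w (Nat.zero_le _) hD''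
      refine ⟨v, hdv, hcv, hvv, hbv, ?_⟩
      rcases hcase with ⟨h0, hv0, hw0⟩ | ⟨hlt, hh, hl⟩
      · refine Or.inl ⟨hv0, r, hr, hrA, ?_⟩
        have hout : out g j = [] := List.length_eq_zero_iff.mp h0.symm
        change ((rl g).get j).output = [] at hout; rw [hj] at hout
        exact hout
      · exact Or.inr ⟨j, by show ((rl g).get j).input = A; rw [hj, hrA], hlt, hh, hl⟩
    refine ⟨hC, ?_⟩
    intro j
    suffices key : ∀ d i (w : List T), mj g j - i ≤ d → i ≤ mj g j →
        DerN g N ((out g j).drop i) (w.map Symbol.terminal) →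
        ∃ v, DyckK (kk g) v ∧ List.Chain' (P g) v ∧ (∀ z ∈ v, Vl g z) ∧ v.flatMap (ff g) = w ∧
          ((i = mj g j ∧ v = [] ∧ w = []) ∨
           (i < mj g j ∧ v.head? = some (Op g j i) ∧
              v.getLast? = some (Cl g j (mj g j - 1)))) by
      intro i w hi hD
      exact key _ i w le_rfl hi hD
    have base : ∀ (w : List T), DerN g N ((out g j).drop (mj g j)) (w.map Symbol.terminal) →
        w = [] := by
      intro w hD
      rw [show mj g j = (out g j).length from rfl, List.drop_length] at hD
      have hrig := (show DerN g N (List.map Symbol.terminal ([] : List T))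
        (w.map Symbol.terminal) by simpa using hD).terminal_rigid
      simpa using hrig
    intro d
    induction d with
    | zero =>
      intro i w hd hi hD
      have him : i = mj g j := by omega
      subst him
      obtain rfl := base w hD
      exact ⟨[], DyckK.nil, List.isChain_nil, by simp, by simp, Or.inl ⟨rfl, rfl, rfl⟩⟩
    | succ d ihd =>
      intro i w hd hi hD
      by_cases him : i = mj g j
      · subst him
        obtain rfl := base w hD
        exact ⟨[], DyckK.nil, List.isChain_nil, by simp, by simp, Or.inl ⟨rfl, rfl, rfl⟩⟩
      · have hilt : i < mj g j := lt_of_le_of_ne hi him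
        rw [List.drop_eq_getElem_cons (show i < (out g j).length from hilt)] at hD
        rw [show ((out g j)[i] :: (out g j).drop (i + 1))
          = [(out g j)[i]] ++ (out g j).drop (i + 1) from rfl] at hD
        obtain ⟨x₁, x₂, hx, h1, h2⟩ := hD.append_split _ _ rfl
        obtain ⟨w₁, w₂, rfl, hw₁, hw₂⟩ := List.map_eq_append_iff.mp hx
        subst hw₁
        subst hw₂
        have piece_spec : ∃ piece : List (Fin (kk g) × Bool),
            DyckK (kk g) piece ∧ List.Chain' (P g) piece ∧ (∀ z ∈ piece, Vl g z) ∧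
            piece.flatMap (ff g) = w₁ ∧ piece.head? = some (Op g j i) ∧
            piece.getLast? = some (Cl g j i) := by
          rcases hsq : (out g j)[i]'hilt with a | B
          · -- terminal position
            rw [hsq] at h1
            have hrig := (show DerN g N (List.map Symbol.terminal [a])
              (w₁.map Symbol.terminal) by simpa using h1).terminal_rigid
            have hw1 : w₁ = [a] := by
              cases w₁ with
              | nil => simp at hrig
              | cons b t =>
                simp only [List.map_cons, List.map_nil, List.cons.injEq] at hrig
                obtain ⟨hb, ht⟩ := hrig
                obtain rfl := Symbol.terminal.inj hb
                simp only [List.map_eq_nil_iff] at ht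
                rw [ht]
            have hsome : (out g j)[i]? = some (Symbol.terminal a) :=
              List.getElem?_eq_some_iff.mpr ⟨hilt, hsq⟩
            refine ⟨[Op g j i, Cl g j i], by simpa [Op, Cl] using DyckK.wrap (enc g j i) DyckK.nil,
              List.isChain_pair.mpr (Or.inl ⟨j, i, hilt, rfl, rfl, Or.inl ⟨a, hsome⟩⟩),
              ?_, ?_, rfl, rfl⟩
            · intro z hz
              simp only [List.mem_cons, List.mem_singleton, List.not_mem_nil, or_false] at hz
              rcases hz with rfl | rfl
              · exact ⟨j, i, hilt, rfl⟩
              · exact ⟨j, i, hilt, rfl⟩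
            · rw [hw1]
              simp [List.flatMap_cons, ff_Cl, ff_Op_terminal g
                (le_trans (Nat.le_of_lt hilt) (mj_le_MM g j)) hsome]
          · -- nonterminal position
            rw [hsq] at h1
            have hsome : (out g j)[i]? = some (Symbol.nonterminal B) :=
              List.getElem?_eq_some_iff.mpr ⟨hilt, hsq⟩
            have hffop : ff g (Op g j i) = [] :=
              ff_Op_nonterminal g (le_trans (Nat.le_of_lt hilt) (mj_le_MM g j)) hsome
            obtain ⟨v₁, hdv₁, hcv₁, hvv₁, hbv₁, hcase₁⟩ := hC B w₁ h1
            rcases hcase₁ with ⟨rfl, r, hr, hrB, hro⟩ | ⟨j₁, hinp₁, hm₁, hh₁, hl₁⟩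
            · -- empty subtree via an ε-rule
              have hw1 : w₁ = [] := by simpa using hbv₁.symm
              refine ⟨[Op g j i, Cl g j i], by simpa [Op, Cl] using DyckK.wrap (enc g j i) DyckK.nil,
                List.isChain_pair.mpr (Or.inl ⟨j, i, hilt, rfl, rfl,
                  Or.inr ⟨r, hr, by rw [hsome, hrB], hro⟩⟩), ?_, ?_, rfl, rfl⟩
              · intro z hz
                simp only [List.mem_cons, List.mem_singleton, List.not_mem_nil, or_false] at hz
                rcases hz with rfl | rfl
                · exact ⟨j, i, hilt, rfl⟩
                · exact ⟨j, i, hilt, rfl⟩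
              · rw [hw1]
                simp [List.flatMap_cons, ff_Cl, hffop]
            · -- nonempty subtree
              have hne₁ : v₁ ≠ [] := by
                intro h
                rw [h] at hh₁
                simp at hh₁
              refine ⟨Op g j i :: (v₁ ++ [Cl g j i]), ?_, ?_, ?_, ?_, rfl, ?_⟩
              · exact DyckK.wrap (enc g j i) hdv₁
              · rw [List.Chain', List.isChain_cons]
                constructor
                · intro z hz
                  rw [List.head?_append, hh₁] at hz
                  obtain rfl := Option.some.inj hz
                  exact Or.inr (Or.inl ⟨j, i, j₁, hilt, hm₁, rfl, rfl,
                    by rw [hsome, hinp₁]⟩)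
                · rw [List.isChain_append]
                  refine ⟨hcv₁, List.isChain_singleton _, ?_⟩
                  intro p hp z hz
                  rw [hl₁] at hp
                  obtain rfl := Option.some.inj hp
                  obtain rfl : Cl g j i = z := by simpa using hz
                  exact Or.inr (Or.inr (Or.inr ⟨j, i, j₁, hilt, hm₁, rfl, rfl,
                    by rw [hsome, hinp₁]⟩))
              · intro z hz
                simp only [List.mem_cons, List.mem_append, List.mem_singleton, List.not_mem_nil, or_false] at hz
                rcases hz with rfl | hz | rfl
                · exact ⟨j, i, hilt, rfl⟩
                · exact hvv₁ z hz
                · exact ⟨j, i, hilt, rfl⟩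
              · simp [List.flatMap_cons, List.flatMap_append, ff_Cl, hffop, hbv₁]
              · rw [show Op g j i :: (v₁ ++ [Cl g j i]) = (Op g j i :: v₁) ++ [Cl g j i] by simp,
                  List.getLast?_concat]
        obtain ⟨piece, hdp, hcp, hvp, hbp, hhp, hlp⟩ := piece_spec
        obtain ⟨v₂, hdv₂, hcv₂, hvv₂, hbv₂, hcase₂⟩ := ihd (i + 1) w₂ (by omega) (by omega) h2
        refine ⟨piece ++ v₂, hdp.append hdv₂, ?_, ?_,
          by simp [List.flatMap_append, hbp, hbv₂], Or.inr ⟨hilt, ?_, ?_⟩⟩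
        · rw [List.Chain', List.isChain_append]
          refine ⟨hcp, hcv₂, ?_⟩
          intro p hp z hz
          rw [hlp] at hp
          obtain rfl := Option.some.inj hp
          rcases hcase₂ with ⟨-, rfl, -⟩ | ⟨hlt₂, hh₂, -⟩
          · simp at hz
          · rw [hh₂] at hz
            obtain rfl := Option.some.inj hz
            exact Or.inr (Or.inr (Or.inl ⟨j, i, hlt₂, rfl, rfl⟩))
        · intro z hz
          rcases List.mem_append.mp hz with hz | hz
          · exact hvp z hz
          · exact hvv₂ z hz
        · rw [List.head?_append, hhp]
          rfl
        · rw [List.getLast?_append]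
          rcases hcase₂ with ⟨him₂, rfl, -⟩ | ⟨-, -, hl₂⟩
          · rw [show (mj g j - 1) = i by omega]
            simp [hlp]
          · rw [hl₂]
            rfl

end CS
end PartF

section PartG
namespace CS

open List ContextFreeGrammar ContextFreeRule

theorem main1 {T : Type} (L : Language T) (hL : L.IsContextFree) :
    ∃ (k : ℕ) (R : Language (Fin k × Bool)) (f : Fin k × Bool → List T),
      R.IsRegular ∧ L = (fun w => w.flatMap f) '' (R ∩ {w | DyckK k w}) := by
  obtain ⟨g, rfl⟩ := hL
  refine ⟨kk g, RL g, ff g, RL_regular g, ?_⟩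
  ext w
  constructor
  · intro hw
    obtain ⟨n, hn⟩ := derN_of_derives ((mem_language_iff g w).mp hw)
    obtain ⟨v, hdv, hcv, hvv, hbv, hcase⟩ := (encode_main g n).1 g.initial w hn
    refine ⟨v, ⟨?_, hdv⟩, hbv⟩
    rcases hcase with ⟨rfl, -⟩ | ⟨j, hinp, hm, hh, hl⟩
    · have hw0 : w = [] := by simpa using hbv.symm
      subst hw0
      exact (mem_RL g).mpr (Or.inl ⟨rfl, hw⟩)
    · have hne : v ≠ [] := by
        intro h
        rw [h] at hh
        simp at hh
      refine (mem_RL g).mpr (Or.inr ⟨hne, hcv, hvv, ?_, ?_⟩)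
      · have hhead : v.head hne = Op g j 0 :=
          Option.some.inj ((List.head?_eq_head hne).symm.trans hh)
        rw [hhead]
        exact ⟨j, hm, hinp, rfl⟩
      · have hlast : v.getLast hne = Cl g j (mj g j - 1) :=
          Option.some.inj ((List.getLast?_eq_getLast hne).symm.trans hl)
        rw [hlast]
        exact ⟨j, hm, hinp, rfl⟩
  · rintro ⟨v, ⟨hR, hD⟩, rfl⟩
    rcases (mem_RL g).mp hR with ⟨rfl, hnil⟩ | ⟨hne, hcv, hvv, hg0, hgE⟩
    · simpa using hnil
    · obtain ⟨j, hm, hinp, hOp⟩ := hg0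
      have hh : v.head? = some (Op g j 0) := by
        rw [List.head?_eq_head hne, hOp]
      obtain ⟨i', -, hi', hlast, hDer⟩ := decode g v.length v le_rfl hD hcv hvv j 0 hm hh
      obtain ⟨j₂, hm₂, hinp₂, hCl⟩ := hgE
      have hlast2 : v.getLast? = some (Cl g j₂ (mj g j₂ - 1)) := by
        rw [List.getLast?_eq_getLast hne, hCl]
      rw [hlast2] at hlast
      obtain ⟨h5, h6⟩ := enc_inj' g (Nat.sub_lt hm₂ one_pos) hi'
        (congrArg Prod.fst (Option.some.inj hlast))
      have h5' : j = j₂ := h5.symm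
      subst h5'
      rw [← h6] at hDer
      rw [show mj g j - 1 + 1 = mj g j by omega,
        show (mj g j) = (out g j).length from rfl, List.take_length, List.drop_zero] at hDer
      show g.Derives [Symbol.nonterminal g.initial] (List.map Symbol.terminal (v.flatMap (ff g)))
      refine Produces.trans_derives ⟨(rl g).get j, get_mem_rules g j, ?_⟩ hDer
      rw [← hinp]
      exact ContextFreeRule.Rewrites.input_output

end CS
end PartG


/-- (Chomsky–Schützenberger) every language accepted by a pushdown
automaton, i.e. every context-free language `L`, can be written as `h(R ∩ D_k)` for some
regular `R`, Dyck language `D_k`, and free-monoid homomorphism `h` (determined by its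
values `f` on letters, acting by `w ↦ w.bind f`); hence every class `C` of languages
containing all regular languages and all Dyck languages, closed under intersection with a
regular language and under homomorphic images, contains all context-free languages. -/
theorem stmt19 :
    (∀ (T : Type) (L : Language T), L.IsContextFree →
      ∃ (k : ℕ) (R : Language (Fin k × Bool)) (f : Fin k × Bool → List T),
        R.IsRegular ∧ L = (fun w => w.flatMap f) '' (R ∩ {w | DyckK k w})) ∧
    (∀ C : (α : Type) → Language α → Prop,
      (∀ (α : Type) (L : Language α), L.IsRegular → C α L) →
      (∀ k : ℕ, C (Fin k × Bool) {w | DyckK k w}) →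
      (∀ (α : Type) (R L : Language α), R.IsRegular → C α L → C α ((R ∩ L : Set (List α)))) →
      (∀ (α β : Type) (f : α → List β) (L : Language α),
        C α L → C β ((fun w => w.flatMap f) '' L)) →
      ∀ (α : Type) (L : Language α), L.IsContextFree → C α L) := by
  constructor
  · exact fun T L hL => CS.main1 L hL
  · intro C hreg hdyck hint himg α L hL
    obtain ⟨k, R, f, hR, hEq⟩ := CS.main1 L hL
    rw [hEq]
    exact himg _ _ f _ (hint _ R _ hR (hdyck k))
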